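/- The number of signed skew derangements on [n] equals D_n^B + D_{n-1}^B, where D_n^B is the number of derangements of type B on [n] and D_0^B = 1. -/
import Mathlib

section Aux

open Fin Function

/-- Reconstruct a sign sequence from its first value and consecutive-equality bits. -/
def epsAux (m : ℕ) (e : Bool) (δ : Fin m → Bool) : ℕ → Bool
  | 0 => e
  | k+1 => if h : k < m then (epsAux m e δ k == δ ⟨k, h⟩) else true

lemma bool1 : ∀ a b : Bool, (a == (b == a)) = b := by decide
lemma bool2 : ∀ a b : Bool, ((a == b) == a) = b := by decide

/-- Generic split of a subtype card along a decidable predicate. -/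
lemma card_split {α : Type*} [Fintype α] (P Q : α → Prop)
    [DecidablePred P] [DecidablePred Q] [DecidablePred (fun x => P x ∧ Q x)]
    [DecidablePred (fun x => P x ∧ ¬ Q x)] :
    Fintype.card {x // P x} =
      Fintype.card {x // P x ∧ Q x} + Fintype.card {x // P x ∧ ¬ Q x} := by
  classical
  simp only [Fintype.card_subtype]
  rw [← Finset.card_filter_add_card_filter_not (s := Finset.univ.filter P) Q]
  congr 1 <;> rw [Finset.filter_filter] <;>
    exact congrArg Finset.card (Finset.filter_congr_decidable ..)

variable (m : ℕ)

/-- Type-B derangements, pair form. -/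
abbrev BP := {q : (Fin m → Bool) × (Fin m → Fin m) //
    Function.Injective q.2 ∧ ∀ i, ¬(q.2 i = i ∧ q.1 i = true)}

/-- The intermediate structure: δ has `m` bits, τ acts on `Fin (m+1)`,
    and fixed points away from `last` are forbidden when the bit is true. -/
abbrev DPpred (p : (Fin m → Bool) × (Fin (m+1) → Fin (m+1))) : Prop :=
  Function.Injective p.2 ∧ ∀ i : Fin m, ¬(p.2 i.castSucc = i.castSucc ∧ p.1 i = true)

abbrev BPpred (q : (Fin (m+1) → Bool) × (Fin (m+1) → Fin (m+1))) : Prop :=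
  Function.Injective q.2 ∧ ∀ j, ¬(q.2 j = j ∧ q.1 j = true)

/-- Equiv (vii): the statement's function form vs the pair form. -/
def eqBT : {f : Fin m → Fin m × Bool //
      Function.Injective (fun i => (f i).1) ∧ ∀ i, f i ≠ (i, true)} ≃ BP m where
  toFun f := ⟨(fun i => (f.1 i).2, fun i => (f.1 i).1), f.2.1, by
    intro i ⟨h1, h2⟩
    exact f.2.2 i (Prod.ext h1 h2)⟩
  invFun q := ⟨fun i => (q.1.2 i, q.1.1 i), q.2.1, by
    intro i h
    exact q.2.2 i ⟨congrArg Prod.fst h, congrArg Prod.snd h⟩⟩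
  left_inv f := by ext i <;> rfl
  right_inv q := by ext i <;> rfl

-- helper: if τ is injective and fixes `last`, nothing else maps to `last`
lemma ne_last_of_fix {τ : Fin (m+1) → Fin (m+1)} (hinj : Function.Injective τ)
    (hl : τ (Fin.last m) = Fin.last m) (i : Fin m) : τ i.castSucc ≠ Fin.last m :=
  fun h => (Fin.castSucc_lt_last i).ne (hinj (h.trans hl.symm))

-- helper: restriction of an injective map fixing last is injective
lemma restr_inj {τ : Fin (m+1) → Fin (m+1)} (hinj : Function.Injective τ)
    (hne : ∀ i : Fin m, τ i.castSucc ≠ Fin.last m) :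
    Function.Injective (fun i : Fin m => (τ i.castSucc).castPred (hne i)) := by
  intro a b hab
  have h1 : τ a.castSucc = τ b.castSucc := by
    have := congrArg Fin.castSucc hab
    rwa [Fin.castSucc_castPred, Fin.castSucc_castPred] at this
  exact Fin.castSucc_injective m (hinj h1)

-- helper: the extension map and its injectivity
def extFun (τ' : Fin m → Fin m) (j : Fin (m+1)) : Fin (m+1) :=
  if hj : j = Fin.last m then Fin.last m else (τ' (j.castPred hj)).castSucc

lemma extFun_inj {τ' : Fin m → Fin m} (h : Function.Injective τ') :
    Function.Injective (extFun m τ') := by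
  intro a b hab
  unfold extFun at hab
  by_cases ha : a = Fin.last m <;> by_cases hb : b = Fin.last m
  · rw [ha, hb]
  · rw [dif_pos ha, dif_neg hb] at hab
    exact absurd hab.symm (Fin.castSucc_lt_last _).ne
  · rw [dif_pos hb, dif_neg ha] at hab
    exact absurd hab (Fin.castSucc_lt_last _).ne
  · rw [dif_neg ha, dif_neg hb] at hab
    have := h (Fin.castSucc_injective m hab)
    have := congrArg Fin.castSucc this
    rwa [Fin.castSucc_castPred, Fin.castSucc_castPred] at this

lemma extFun_last (τ' : Fin m → Fin m) : extFun m τ' (Fin.last m) = Fin.last m := by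
  simp [extFun]

lemma extFun_castSucc (τ' : Fin m → Fin m) (i : Fin m) :
    extFun m τ' i.castSucc = (τ' i).castSucc := by
  rw [extFun, dif_neg (Fin.castSucc_lt_last i).ne, Fin.castPred_castSucc]

lemma extFun_restr {τ : Fin (m+1) → Fin (m+1)} (hl : τ (Fin.last m) = Fin.last m)
    (hne : ∀ i : Fin m, τ i.castSucc ≠ Fin.last m) :
    extFun m (fun i => (τ i.castSucc).castPred (hne i)) = τ := by
  funext j
  by_cases hj : j = Fin.last m
  · rw [hj, extFun_last]; exact hl.symm
  · rw [extFun, dif_neg hj, Fin.castSucc_castPred, Fin.castSucc_castPred]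

lemma restr_extFun (τ' : Fin m → Fin m)
    (hne : ∀ i : Fin m, extFun m τ' i.castSucc ≠ Fin.last m) :
    (fun i : Fin m => (extFun m τ' i.castSucc).castPred (hne i)) = τ' := by
  funext i
  apply Fin.castSucc_injective m
  rw [Fin.castSucc_castPred, extFun_castSucc]

-- similarly for bit functions
def extBit (e : Bool) (δ : Fin m → Bool) (j : Fin (m+1)) : Bool :=
  if hj : j = Fin.last m then e else δ (j.castPred hj)

lemma extBit_last (e : Bool) (δ : Fin m → Bool) : extBit m e δ (Fin.last m) = e := by
  simp [extBit]

lemma extBit_castSucc (e : Bool) (δ : Fin m → Bool) (i : Fin m) :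
    extBit m e δ i.castSucc = δ i := by
  rw [extBit, dif_neg (Fin.castSucc_lt_last i).ne, Fin.castPred_castSucc]

lemma extBit_restr (b : Fin (m+1) → Bool) :
    extBit m (b (Fin.last m)) (fun i => b i.castSucc) = b := by
  funext j
  by_cases hj : j = Fin.last m
  · rw [hj, extBit_last]
  · rw [extBit, dif_neg hj, Fin.castSucc_castPred]

/-- Equiv (v): (δ, τ) with τ fixing `last` ≃ BP m. -/
def eqDfix : {p : (Fin m → Bool) × (Fin (m+1) → Fin (m+1)) //
      DPpred m p ∧ p.2 (Fin.last m) = Fin.last m} ≃ BP m where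
  toFun p :=
    ⟨(p.1.1, fun i => (p.1.2 i.castSucc).castPred
        (ne_last_of_fix m p.2.1.1 p.2.2 i)),
      restr_inj m p.2.1.1 (ne_last_of_fix m p.2.1.1 p.2.2), by
      intro i ⟨h1, h2⟩
      have h3 : p.1.2 i.castSucc = i.castSucc := by
        have := congrArg Fin.castSucc h1
        rwa [Fin.castSucc_castPred] at this
      exact p.2.1.2 i ⟨h3, h2⟩⟩
  invFun q :=
    ⟨(q.1.1, extFun m q.1.2), ⟨extFun_inj m q.2.1, by
      intro i ⟨h1, h2⟩
      dsimp only at h1 h2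
      rw [extFun_castSucc] at h1
      exact q.2.2 i ⟨Fin.castSucc_injective m h1, h2⟩⟩, extFun_last m _⟩
  left_inv p := by
    apply Subtype.ext
    dsimp only
    exact Prod.ext rfl (extFun_restr m p.2.2 (ne_last_of_fix m p.2.1.1 p.2.2))
  right_inv q := by
    apply Subtype.ext
    dsimp only
    exact Prod.ext rfl (restr_extFun m q.1.2 (ne_last_of_fix m (extFun_inj m q.2.1) (extFun_last m _)))

/-- Equiv (vi): type-B derangements of `Fin (m+1)` fixing `last` ≃ BP m. -/
def eqBfix : {q : (Fin (m+1) → Bool) × (Fin (m+1) → Fin (m+1)) //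
      BPpred m q ∧ q.2 (Fin.last m) = Fin.last m} ≃ BP m where
  toFun q :=
    ⟨(fun i => q.1.1 i.castSucc, fun i => (q.1.2 i.castSucc).castPred
        (ne_last_of_fix m q.2.1.1 q.2.2 i)),
      restr_inj m q.2.1.1 (ne_last_of_fix m q.2.1.1 q.2.2), by
      intro i ⟨h1, h2⟩
      have h3 : q.1.2 i.castSucc = i.castSucc := by
        have := congrArg Fin.castSucc h1
        rwa [Fin.castSucc_castPred] at this
      exact q.2.1.2 i.castSucc ⟨h3, h2⟩⟩
  invFun q :=
    ⟨(extBit m false q.1.1, extFun m q.1.2), ⟨extFun_inj m q.2.1, by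
      intro j ⟨h1, h2⟩
      dsimp only at h1 h2
      by_cases hj : j = Fin.last m
      · rw [hj, extBit_last] at h2; exact Bool.false_ne_true h2
      · rw [show j = (j.castPred hj).castSucc from (Fin.castSucc_castPred j hj).symm,
          extFun_castSucc] at h1
        rw [show j = (j.castPred hj).castSucc from (Fin.castSucc_castPred j hj).symm,
          extBit_castSucc] at h2
        exact q.2.2 (j.castPred hj) ⟨Fin.castSucc_injective m
          (by rwa [Fin.castSucc_castPred] at h1), h2⟩⟩, extFun_last m _⟩
  left_inv q := by
    have hbl : q.1.1 (Fin.last m) = false := by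
      cases hbl : q.1.1 (Fin.last m)
      · rfl
      · exact absurd ⟨q.2.2, hbl⟩ (q.2.1.2 (Fin.last m))
    apply Subtype.ext
    dsimp only
    refine Prod.ext ?_ (extFun_restr m q.2.2 (ne_last_of_fix m q.2.1.1 q.2.2))
    show extBit m false (fun i => q.1.1 i.castSucc) = q.1.1
    have h := extBit_restr m q.1.1
    rw [hbl] at h
    exact h
  right_inv q := by
    apply Subtype.ext
    dsimp only
    exact Prod.ext (funext fun i => extBit_castSucc m false q.1.1 i)
      (restr_extFun m q.1.2 (ne_last_of_fix m (extFun_inj m q.2.1) (extFun_last m _)))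

/-- Equiv (iv): a Bool together with (δ, τ) not fixing `last`
    ≃ type-B derangements of `Fin (m+1)` not fixing `last`. -/
def eqDnot : Bool × {p : (Fin m → Bool) × (Fin (m+1) → Fin (m+1)) //
      DPpred m p ∧ ¬ p.2 (Fin.last m) = Fin.last m} ≃
    {q : (Fin (m+1) → Bool) × (Fin (m+1) → Fin (m+1)) //
      BPpred m q ∧ ¬ q.2 (Fin.last m) = Fin.last m} where
  toFun ep :=
    ⟨(extBit m ep.1 ep.2.1.1, ep.2.1.2), ⟨ep.2.2.1.1, by
      intro j ⟨h1, h2⟩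
      dsimp only at h1 h2
      by_cases hj : j = Fin.last m
      · rw [hj] at h1; exact ep.2.2.2 h1
      · rw [show j = (j.castPred hj).castSucc from (Fin.castSucc_castPred j hj).symm,
          extBit_castSucc] at h2
        rw [show j = (j.castPred hj).castSucc from (Fin.castSucc_castPred j hj).symm] at h1
        exact ep.2.2.1.2 (j.castPred hj) ⟨h1, h2⟩⟩, ep.2.2.2⟩
  invFun q :=
    ⟨q.1.1 (Fin.last m), ⟨(fun i => q.1.1 i.castSucc, q.1.2), ⟨q.2.1.1,
      fun i h => q.2.1.2 i.castSucc h⟩, q.2.2⟩⟩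
  left_inv ep := by
    refine Prod.ext (extBit_last m _ _) (Subtype.ext (Prod.ext ?_ rfl))
    funext i
    exact extBit_castSucc m _ _ i
  right_inv q := by
    apply Subtype.ext
    dsimp only
    exact Prod.ext (extBit_restr m q.1.1) rfl

/-- The big ambient reparametrization: ε ↦ (first bit, consecutive-equality bits),
    σ ↦ σ - 1 (cyclic shift). -/
def eqShift : ((Fin (m+1) → Bool) × (Fin (m+1) → Fin (m+1))) ≃
    (Bool × ((Fin m → Bool) × (Fin (m+1) → Fin (m+1)))) where
  toFun p := (p.1 0, ((fun i => p.1 i.succ == p.1 i.castSucc), fun j => p.2 j - 1))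
  invFun q := ((fun j => epsAux m q.1 q.2.1 j.val), fun j => q.2.2 j + 1)
  left_inv p := by
    apply Prod.ext
    · funext j
      have key : ∀ k (h : k < m + 1),
          epsAux m (p.1 0) (fun i => p.1 i.succ == p.1 i.castSucc) k = p.1 ⟨k, h⟩ := by
        intro k
        induction k with
        | zero => intro h; rfl
        | succ k ih =>
          intro h
          have hk : k < m := by omega
          show (if h' : k < m then _ else _) = _
          rw [dif_pos hk, ih (by omega)]
          exact bool1 _ _
      have := key j.val j.isLt
      simpa using this
    · funext j
      simp [sub_add_cancel]
  right_inv q := by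
    refine Prod.ext rfl (Prod.ext ?_ ?_)
    · funext i
      show (epsAux m q.1 q.2.1 (i.succ).val == epsAux m q.1 q.2.1 (i.castSucc).val)
        = q.2.1 i
      have h1 : (i.succ).val = i.val + 1 := rfl
      have h2 : (i.castSucc).val = i.val := rfl
      rw [h1, h2]
      show ((if h : i.val < m then _ else _) == _) = _
      rw [dif_pos i.isLt]
      have h3 : (⟨i.val, i.isLt⟩ : Fin m) = i := rfl
      rw [h3]
      exact bool2 _ _
    · funext j
      simp [add_sub_cancel_right]

/-- Predicate transport across `eqShift`. -/
lemma shift_pred (p : (Fin (m+1) → Bool) × (Fin (m+1) → Fin (m+1))) :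
    (Function.Injective p.2 ∧
      ∀ i : Fin (m+1), ¬((p.2 i).val = i.val + 1 ∧ p.1 (p.2 i) = p.1 i)) ↔
    DPpred m ((eqShift m) p).2 := by
  obtain ⟨ε, σ⟩ := p
  show _ ↔ (Function.Injective (fun j : Fin (m+1) => σ j - 1) ∧
    ∀ i : Fin m, ¬((σ i.castSucc - 1 = i.castSucc) ∧ (ε i.succ == ε i.castSucc) = true))
  have hsub : Function.Injective (fun j : Fin (m+1) => σ j - 1) ↔
      Function.Injective σ := by
    constructor
    · intro h a b hab
      apply h
      simp only [hab]
    · intro h a b hab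
      apply h
      have := congrArg (· + 1) hab
      simpa [sub_add_cancel] using this
  have key : ∀ i : Fin m, (σ i.castSucc - 1 = i.castSucc ↔
      (σ i.castSucc).val = i.castSucc.val + 1) := by
    intro i
    rw [sub_eq_iff_eq_add, Fin.coeSucc_eq_succ]
    constructor
    · intro h; rw [h]; rfl
    · intro h; apply Fin.ext; rw [h]; rfl
  constructor
  · rintro ⟨hinj, hc⟩
    refine ⟨hsub.2 hinj, ?_⟩
    rintro i ⟨h1, h2⟩
    rw [key i] at h1
    apply hc i.castSucc
    refine ⟨h1, ?_⟩
    have hσ : σ i.castSucc = i.succ := by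
      apply Fin.ext; rw [h1]; rfl
    show ε (σ i.castSucc) = ε i.castSucc
    rw [hσ]
    exact eq_of_beq h2
  · rintro ⟨hinj, hc⟩
    refine ⟨hsub.1 hinj, ?_⟩
    rintro j ⟨h1, h2⟩
    dsimp only at h1 h2
    have hjm : j.val < m := by
      have := (σ j).isLt; omega
    set i : Fin m := ⟨j.val, hjm⟩ with hi
    have hji : j = i.castSucc := by apply Fin.ext; rfl
    apply hc i
    constructor
    · rw [key i, ← hji]; exact h1
    · have hσ : σ j = i.succ := by
        apply Fin.ext; rw [h1]; rfl
      rw [← hji]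
      show (ε i.succ == ε i.castSucc) = true
      rw [← hσ, ← hji, h2]
      exact beq_self_eq_true (ε j)

/-- Drop the independent Bool component. -/
def eqDropBool {β : Type*} (Q : β → Prop) :
    {p : Bool × β // Q p.2} ≃ Bool × {b // Q b} where
  toFun x := (x.1.1, ⟨x.1.2, x.2⟩)
  invFun y := ⟨(y.1, y.2.1), y.2.2⟩
  left_inv x := rfl
  right_inv y := rfl

/-- Equiv (0): eliminate the determined sign component of g. -/
def eqZero (n : ℕ) : {p : (Fin n → Bool) × (Fin n → Fin n × Bool) //
      Function.Injective (fun i => (p.2 i).1) ∧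
      (∀ i, (p.2 i).2 = p.1 ((p.2 i).1)) ∧
      ∀ i : Fin n, ¬((p.2 i).1.val = i.val + 1 ∧ (p.2 i).2 = p.1 i)} ≃
    {p : (Fin n → Bool) × (Fin n → Fin n) //
      Function.Injective p.2 ∧
      ∀ i : Fin n, ¬((p.2 i).val = i.val + 1 ∧ p.1 (p.2 i) = p.1 i)} where
  toFun p :=
    ⟨(p.1.1, fun i => (p.1.2 i).1), p.2.1, by
      rintro i ⟨h1, h2⟩
      exact p.2.2.2 i ⟨h1, (p.2.2.1 i).trans h2⟩⟩
  invFun p :=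
    ⟨(p.1.1, fun i => (p.1.2 i, p.1.1 (p.1.2 i))), p.2.1, fun i => rfl, by
      rintro i ⟨h1, h2⟩
      exact p.2.2 i ⟨h1, h2⟩⟩
  left_inv p := Subtype.ext (Prod.ext rfl (funext fun i =>
    (Prod.ext rfl (p.2.2.1 i).symm : ((p.1.2 i).1, p.1.1 (p.1.2 i).1) = p.1.2 i)))
  right_inv p := Subtype.ext rfl

end Aux

/-- The number of signed skew derangements on [n] equals D_n^B + D_{n-1}^B
    (with D_0^B = 1, which holds automatically for the empty type). Encoding:
    a signed skew derangement is a pair (ε, g) with ε : Fin n → Bool the sign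
    function of the signed set X and `g i = (v, b)` the image of ±(i+1) ∈ X,
    the sign of the element of X-1 with value v being ε v, and no fixed point;
    a derangement of type B is `f : Fin n → Fin n × Bool` with injective
    first component and no unbarred fixed point. -/
theorem skew_derangement_typeB_count (n : ℕ) (hn : 1 ≤ n) :
    Fintype.card {p : (Fin n → Bool) × (Fin n → Fin n × Bool) //
        Function.Injective (fun i => (p.2 i).1) ∧
        (∀ i, (p.2 i).2 = p.1 ((p.2 i).1)) ∧
        ∀ i : Fin n, ¬((p.2 i).1.val = i.val + 1 ∧ (p.2 i).2 = p.1 i)} =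
      Fintype.card {f : Fin n → Fin n × Bool //
          Function.Injective (fun i => (f i).1) ∧ ∀ i, f i ≠ (i, true)} +
      Fintype.card {f : Fin (n - 1) → Fin (n - 1) × Bool //
          Function.Injective (fun i => (f i).1) ∧ ∀ i, f i ≠ (i, true)} := by
  classical
  obtain ⟨m, rfl⟩ : ∃ m, n = m + 1 := ⟨n - 1, by omega⟩
  -- Step 0: eliminate sign component
  rw [Fintype.card_congr (eqZero (m+1))]
  -- Step 1: reparametrize via eqShift
  rw [Fintype.card_congr (((eqShift m).subtypeEquiv (fun p => shift_pred m p)).trans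
    (eqDropBool (fun b => DPpred m b)))]
  -- Now: card (Bool × {p // DPpred m p}) = ...
  rw [Fintype.card_prod, Fintype.card_bool]
  -- Split D
  rw [card_split (DPpred m) (fun p => p.2 (Fin.last m) = Fin.last m)]
  -- Split B side
  rw [Fintype.card_congr (eqBT (m+1)),
    show (m + 1 - 1) = m from rfl, Fintype.card_congr (eqBT m)]
  rw [show (Fintype.card (BP (m+1)) : ℕ) =
    Fintype.card {q // BPpred m q ∧ q.2 (Fin.last m) = Fin.last m} +
    Fintype.card {q // BPpred m q ∧ ¬ q.2 (Fin.last m) = Fin.last m} from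
    card_split (BPpred m) (fun q => q.2 (Fin.last m) = Fin.last m)]
  rw [Fintype.card_congr (eqDfix m), Fintype.card_congr (eqBfix m)]
  have h2 : 2 * Fintype.card {p : (Fin m → Bool) × (Fin (m+1) → Fin (m+1)) //
      DPpred m p ∧ ¬ p.2 (Fin.last m) = Fin.last m} =
      Fintype.card {q : (Fin (m+1) → Bool) × (Fin (m+1) → Fin (m+1)) //
      BPpred m q ∧ ¬ q.2 (Fin.last m) = Fin.last m} := by
    rw [← Fintype.card_congr (eqDnot m), Fintype.card_prod, Fintype.card_bool]
  omega
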